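/- Let B be a domain over a field k with a nontrivial exponential map φ, and let S be a multiplicatively closed subset of B^φ \ {0}. Then φ extends to a nontrivial exponential map S⁻¹φ on the localization S⁻¹B, and (S⁻¹B)^{S⁻¹φ} = S⁻¹(B^φ). -/

import Mathlib

open Polynomial

/-- An exponential map on a `k`-algebra `B`: a `k`-algebra homomorphism
`φ : B → B[U]` with `ε₀ ∘ φ = id` and the coaction condition `φ_V φ_U = φ_{U+V}`. -/
structure ExpMap (k B : Type*) [CommRing k] [CommRing B] [Algebra k B] where
  toAlgHom : B →ₐ[k] Polynomial B
  eval_zero : ∀ b, (toAlgHom b).eval 0 = b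
  coaction : ∀ b, (toAlgHom b).map toAlgHom.toRingHom =
    (toAlgHom b).eval₂ (Polynomial.C.comp Polynomial.C)
      (Polynomial.X + Polynomial.C Polynomial.X)

namespace ExpMap

variable {k B : Type*} [CommRing k] [CommRing B] [Algebra k B]

/-- The ring of invariants `B^φ = {b ∈ B : φ(b) = b}` of an exponential map. -/
noncomputable def fixed (φ : ExpMap k B) : Subalgebra k B :=
  AlgHom.equalizer φ.toAlgHom Polynomial.CAlgHom

/-- An exponential map is nontrivial if `B^φ ≠ B`. -/
def IsNontrivial (φ : ExpMap k B) : Prop := φ.fixed ≠ ⊤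

end ExpMap

/-- The Makar-Limanov invariant: the intersection of the rings of invariants of all
exponential maps on `B`. -/
noncomputable def ML (k B : Type*) [CommRing k] [CommRing B] [Algebra k B] : Subalgebra k B :=
  ⨅ φ : ExpMap k B, φ.fixed

/-- The Derksen invariant: the `k`-subalgebra of `B` generated by the rings of invariants
of all nontrivial exponential maps on `B`. -/
noncomputable def DK (k B : Type*) [CommRing k] [CommRing B] [Algebra k B] : Subalgebra k B :=
  Algebra.adjoin k (⋃ φ ∈ {φ : ExpMap k B | φ.IsNontrivial}, (φ.fixed : Set B))

/-- An exponential map `φ` on a `k`-domain `B` induces, for any multiplicatively closed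
`S ⊆ B^φ \ {0}`, a nontrivial exponential map `S⁻¹φ` on `S⁻¹B` extending `φ`, whose ring of
invariants is `S⁻¹(B^φ)`. -/
theorem stmt5 {k B : Type*} [Field k] [CommRing B] [IsDomain B] [Algebra k B]
    (φ : ExpMap k B) (hφ : φ.IsNontrivial)
    (S : Submonoid B) (hS : (S : Set B) ⊆ (φ.fixed : Set B)) (h0 : (0 : B) ∉ S) :
    ∃ ψ : ExpMap k (Localization S),
      (∀ b : B, ψ.toAlgHom (algebraMap B (Localization S) b) =
        (φ.toAlgHom b).map (algebraMap B (Localization S))) ∧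
      ψ.IsNontrivial ∧
      (∀ ξ : Localization S, ξ ∈ ψ.fixed ↔
        ∃ b ∈ φ.fixed, ∃ s : S, ξ * algebraMap B (Localization S) s =
          algebraMap B (Localization S) b) := by
  classical
  set A := Localization S with hA
  set f : B →+* A := algebraMap B A with hf
  have hSnz : S ≤ nonZeroDivisors B := fun s hs =>
    mem_nonZeroDivisors_of_ne_zero (fun h => h0 (h ▸ hs))
  have hinj : Function.Injective f := IsLocalization.injective _ hSnz
  have hfix : ∀ s ∈ S, φ.toAlgHom s = Polynomial.C s := fun s hs => hS hs
  set g : B →+* Polynomial A :=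
    (Polynomial.mapRingHom f).comp φ.toAlgHom.toRingHom with hg
  have hgC : ∀ s : S, g s = Polynomial.C (f s) := by
    intro s
    simp [hg, hfix s s.2]
  have hgu : ∀ s : S, IsUnit (g s) := by
    intro s
    rw [hgC]
    exact (IsLocalization.map_units A s).map Polynomial.C
  set F : A →+* Polynomial A := IsLocalization.lift hgu with hFdef
  have hF : ∀ b : B, F (f b) = (φ.toAlgHom b).map f := fun b =>
    IsLocalization.lift_eq hgu b
  have hcomm : ∀ x : k, F (algebraMap k A x) = algebraMap k (Polynomial A) x := by
    intro x
    rw [IsScalarTower.algebraMap_apply k B A, ← hf, hF, AlgHom.commutes]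
    simp [Polynomial.algebraMap_apply, IsScalarTower.algebraMap_apply k B A]
    rfl
  set Fa : A →ₐ[k] Polynomial A := { F with commutes' := hcomm } with hFa
  have heval : ∀ ξ : A, (F ξ).eval 0 = ξ := by
    have : (Polynomial.evalRingHom (0 : A)).comp F = RingHom.id A := by
      apply IsLocalization.ringHom_ext S
      ext b
      simp only [RingHom.comp_apply, RingHom.coe_coe, hF, Polynomial.coe_evalRingHom,
        Polynomial.eval_map, Polynomial.eval₂_at_zero, ← Polynomial.coeff_zero_eq_eval_zero,
        RingHom.id_apply]
      rw [← hf, hF, Polynomial.coeff_map,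
        Polynomial.coeff_zero_eq_eval_zero, φ.eval_zero]
    intro ξ
    exact RingHom.congr_fun this ξ
  have hcoact : ∀ ξ : A, (F ξ).map F =
      (F ξ).eval₂ (Polynomial.C.comp Polynomial.C)
        (Polynomial.X + Polynomial.C Polynomial.X) := by
    have key : (Polynomial.mapRingHom F).comp F =
        (Polynomial.eval₂RingHom (Polynomial.C.comp Polynomial.C)
          (Polynomial.X + Polynomial.C Polynomial.X : Polynomial (Polynomial A))).comp F := by
      have key2 : ((Polynomial.mapRingHom F).comp F).comp f =
          ((Polynomial.eval₂RingHom (Polynomial.C.comp Polynomial.C)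
            (Polynomial.X + Polynomial.C Polynomial.X : Polynomial (Polynomial A))).comp F).comp f := by
        refine RingHom.ext fun b => ?_
        simp only [RingHom.comp_apply, RingHom.coe_coe, Polynomial.coe_mapRingHom,
          Polynomial.coe_eval₂RingHom]
        rw [hF b, Polynomial.map_map, IsLocalization.lift_comp hgu, hg,
          ← Polynomial.map_map, φ.coaction b, Polynomial.eval₂_map,
          ← Polynomial.coe_mapRingHom, Polynomial.hom_eval₂]
        refine Polynomial.eval₂_congr ?_ ?_ rfl
        · ext c; simp
        · simp
      exact IsLocalization.ringHom_ext (S := A) (P := Polynomial (Polynomial A)) S key2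
    intro ξ
    exact RingHom.congr_fun key ξ
  refine ⟨⟨Fa, heval, hcoact⟩, hF, ?_, ?_⟩
  · intro htop
    apply hφ
    rw [ExpMap.IsNontrivial] at *
    apply eq_top_iff.mpr
    intro b _
    have hb : f b ∈ (⟨Fa, heval, hcoact⟩ : ExpMap k A).fixed := by
      rw [htop]; trivial
    have hb' : F (f b) = Polynomial.C (f b) := hb
    rw [hF b] at hb'
    have : (φ.toAlgHom b).map f = (Polynomial.C b).map f := by
      rw [hb', Polynomial.map_C]
    exact Polynomial.map_injective f hinj this
  · intro ξ
    have hCs : ∀ s : S, F (f s) = Polynomial.C (f s) := by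
      intro s
      rw [hF, hfix s s.2, Polynomial.map_C]
    constructor
    · intro hξ
      have hξ' : F ξ = Polynomial.C ξ := hξ
      obtain ⟨⟨b, s⟩, hbs⟩ := IsLocalization.mk'_surjective S ξ; dsimp only at hbs; subst hbs
      refine ⟨b, ?_, s, IsLocalization.mk'_spec A b s⟩
      have h1 : F (f b) = Polynomial.C (f b) := by
        rw [← IsLocalization.mk'_spec A b s, map_mul, map_mul, hξ', hCs]
      rw [hF b] at h1
      have : (φ.toAlgHom b).map f = (Polynomial.C b).map f := by
        rw [h1, Polynomial.map_C]
      exact Polynomial.map_injective f hinj this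
    · rintro ⟨b, hb, s, h⟩
      have hb' : φ.toAlgHom b = Polynomial.C b := hb
      have h1 : F ξ * Polynomial.C (f s) = Polynomial.C ξ * Polynomial.C (f s) := by
        rw [← hCs s, ← map_mul, h, hF b, hb', Polynomial.map_C, ← h, map_mul, hCs]
      have hu : IsUnit (Polynomial.C (f s) : Polynomial A) :=
        (IsLocalization.map_units A s).map Polynomial.C
      show F ξ = Polynomial.C ξ
      exact hu.mul_right_cancel h1
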